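/- The cubic polynomial P(t) = 162 − 90t + 16t² − t³ has exactly one real root ρ₁ and a pair of complex conjugate roots ρ₂, ρ̄₂, and all three roots have modulus strictly greater than 3. Consequently, the moment generating function F_{3,3,3}(t) = 6(162 - 90t + 16t² - t³)/((4-t)(3-t)⁵) has no zero in the closed disk |t| ≤ 3. -/

import Mathlib

/-- The cubic `162 − 90t + 16t² − t³` has exactly one real root `ρ₁` and a conjugate pair
of non-real roots `ρ₂, conj ρ₂`, all of modulus `> 3`; consequently the moment generating
function `F_{3,3,3}(t) = 6(162 - 90t + 16t² - t³)/((4-t)(3-t)⁵)` has no zero in the closed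
disk `|t| ≤ 3`. -/
theorem F333_no_zero_in_disk
    (P F : ℂ → ℂ)
    (hP : P = fun t => 162 - 90 * t + 16 * t ^ 2 - t ^ 3)
    (hF : F = fun t => 6 * P t / ((4 - t) * (3 - t) ^ 5)) :
    (∃ ρ₁ : ℝ, P ρ₁ = 0 ∧ (∀ x : ℝ, P x = 0 → x = ρ₁) ∧ 3 < |ρ₁| ∧
      ∃ ρ₂ : ℂ, ρ₂.im ≠ 0 ∧ 3 < ‖ρ₂‖ ∧
        ∀ t : ℂ, P t = -((t - ρ₁) * (t - ρ₂) * (t - starRingEnd ℂ ρ₂))) ∧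
    ∀ t : ℂ, ‖t‖ ≤ 3 → t ≠ 3 → F t ≠ 0 := by
  -- real root via IVT
  set f : ℝ → ℝ := fun x => 162 - 90 * x + 16 * x ^ 2 - x ^ 3 with hf
  have hcont : ContinuousOn f (Set.Icc (3:ℝ) 4) := by fun_prop
  have hiv := intermediate_value_Icc' (by norm_num : (3:ℝ) ≤ 4) hcont
  have h0 : (0:ℝ) ∈ Set.Icc (f 4) (f 3) := by
    constructor <;> simp [hf] <;> norm_num
  obtain ⟨r, hrmem, hfr⟩ := hiv h0
  have hr3 : 3 < r := by
    rcases lt_or_eq_of_le hrmem.1 with h | h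
    · exact h
    · exfalso; rw [← h] at hfr; simp [hf] at hfr; norm_num at hfr
  have hfr' : 162 - 90 * r + 16 * r ^ 2 - r ^ 3 = 0 := hfr
  have h1r : r ^ 3 = 16 * r ^ 2 - 90 * r + 162 := by linarith
  have h1 : (r:ℂ) ^ 3 = 16 * (r:ℂ) ^ 2 - 90 * (r:ℂ) + 162 := by exact_mod_cast h1r
  -- the conjugate pair
  have hqpos : 0 < 3 * r ^ 2 - 32 * r + 104 := by nlinarith [sq_nonneg (r - 16/3)]
  set s : ℝ := Real.sqrt (3 * r ^ 2 - 32 * r + 104) / 2 with hs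
  have hs2 : s ^ 2 = (3 * r ^ 2 - 32 * r + 104) / 4 := by
    rw [hs, div_pow, Real.sq_sqrt hqpos.le]; ring
  have hspos : 0 < s := by
    rw [hs]; positivity
  have h2 : (s:ℂ) ^ 2 = (3 * (r:ℂ) ^ 2 - 32 * (r:ℂ) + 104) / 4 := by exact_mod_cast hs2
  set ρ₂ : ℂ := (((16 - r) / 2 : ℝ) : ℂ) + s * Complex.I with hρ₂
  have hconj : starRingEnd ℂ ρ₂ = (((16 - r) / 2 : ℝ) : ℂ) - s * Complex.I := by
    rw [hρ₂, map_add, map_mul, Complex.conj_ofReal, Complex.conj_ofReal, Complex.conj_I]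
    ring
  have hfact : ∀ t : ℂ, P t = -((t - (r:ℂ)) * (t - ρ₂) * (t - starRingEnd ℂ ρ₂)) := by
    intro t
    rw [hP, hconj, hρ₂]
    push_cast
    linear_combination (t - (r:ℂ)) * h2 - h1 - (t - (r:ℂ)) * (s:ℂ) ^ 2 * Complex.I_sq
  have him : ρ₂.im = s := by simp [hρ₂]
  have habs2 : ‖ρ₂‖ ^ 2 = r ^ 2 - 16 * r + 90 := by
    rw [Complex.sq_norm, Complex.normSq_apply]
    simp [hρ₂]
    nlinarith [hs2]
  have habs : 3 < ‖ρ₂‖ := by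
    nlinarith [norm_nonneg ρ₂, habs2, sq_nonneg (r - 8)]
  have hPr : P (r:ℂ) = 0 := by
    rw [hfact]; simp
  -- nonvanishing of P on the disk
  have hPne : ∀ t : ℂ, ‖t‖ ≤ 3 → P t ≠ 0 := by
    intro t ht
    rw [hfact t]
    have h₁ : t - (r:ℂ) ≠ 0 := by
      intro h
      have : t = (r:ℂ) := by linear_combination h
      rw [this] at ht
      rw [Complex.norm_real] at ht
      have : |r| ≤ 3 := ht
      rw [abs_le] at this; linarith
    have h₂ : t - ρ₂ ≠ 0 := by
      intro h
      have : t = ρ₂ := by linear_combination h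
      rw [this] at ht; linarith
    have h₃ : t - starRingEnd ℂ ρ₂ ≠ 0 := by
      intro h
      have ht' : ‖starRingEnd ℂ ρ₂‖ ≤ 3 := by
        rw [← sub_eq_zero.1 h]; exact ht
      rw [Complex.norm_conj] at ht'
      linarith
    simp only [neg_ne_zero]
    exact mul_ne_zero (mul_ne_zero h₁ h₂) h₃
  refine ⟨⟨r, hPr, ?_, ?_, ρ₂, ?_, habs, hfact⟩, ?_⟩
  · intro x hx
    have := hfact (x:ℂ)
    rw [hx] at this
    have hprod : ((x:ℂ) - r) * ((x:ℂ) - ρ₂) * ((x:ℂ) - starRingEnd ℂ ρ₂) = 0 :=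
      neg_eq_zero.mp this.symm
    have hx2 : (x:ℂ) - ρ₂ ≠ 0 := by
      intro h
      have := congrArg Complex.im (sub_eq_zero.1 h)
      simp [him] at this
      linarith
    have hx3 : (x:ℂ) - starRingEnd ℂ ρ₂ ≠ 0 := by
      intro h
      have := congrArg Complex.im (sub_eq_zero.1 h)
      simp [Complex.conj_im, him] at this
      linarith
    rcases mul_eq_zero.1 hprod with h | h
    · rcases mul_eq_zero.1 h with h' | h'
      · exact_mod_cast sub_eq_zero.1 h'
      · exact absurd h' hx2
    · exact absurd h hx3
  · rw [abs_of_pos (by linarith)]; exact hr3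
  · rw [him]; exact hspos.ne'
  · intro t ht htne
    rw [hF]
    apply div_ne_zero
    · exact mul_ne_zero (by norm_num) (hPne t ht)
    · apply mul_ne_zero
      · intro h
        have : t = 4 := by linear_combination -h
        rw [this] at ht
        norm_num [Complex.norm_ofNat] at ht
      · apply pow_ne_zero
        intro h
        exact htne (by linear_combination -h)
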